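/- For any unit vector a in a finite-dimensional complex Hilbert space, any unitary operator W on that space, and any ε > 0, there exists an integer n ≥ 1 such that |⟨a|Wⁿ|a⟩| > 1 − ε. -/

import Mathlib

/-- Quantum recurrence theorem: for any unit vector `a` in a finite-dimensional
complex Hilbert space, any unitary operator `W`, and any `ε > 0`, there is
`n ≥ 1` with `|⟨a|Wⁿ|a⟩| > 1 - ε`. -/
theorem quantum_recurrence {H : Type*} [NormedAddCommGroup H] [InnerProductSpace ℂ H]
    [FiniteDimensional ℂ H] (W : H →L[ℂ] H) (hW : W ∈ unitary (H →L[ℂ] H))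
    (a : H) (ha : ‖a‖ = 1) (ε : ℝ) (hε : 0 < ε) :
    ∃ n : ℕ, 1 ≤ n ∧ ‖(inner ℂ a ((W ^ n) a) : ℂ)‖ > 1 - ε := by
  have hWn : ∀ n : ℕ, W ^ n ∈ unitary (H →L[ℂ] H) := fun n => pow_mem hW n
  set f : ℕ → H := fun n => (W ^ n) a with hf
  have hfnorm : ∀ n, ‖f n‖ = 1 := fun n => by
    rw [hf]; rw [(W ^ n).norm_map_of_mem_unitary (hWn n) a, ha]
  have hcpt : IsCompact (Metric.sphere (0 : H) 1) := isCompact_sphere 0 1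
  have hmem : ∀ n, f n ∈ Metric.sphere (0 : H) 1 := fun n => by
    simp [hfnorm n]
  obtain ⟨x, -, φ, hφ, hlim⟩ := hcpt.tendsto_subseq hmem
  have hcauchy : CauchySeq (f ∘ φ) := hlim.cauchySeq
  obtain ⟨N, hN⟩ := Metric.cauchySeq_iff'.mp hcauchy (Real.sqrt ε) (Real.sqrt_pos.mpr hε)
  have h1 : dist (f (φ (N + 1))) (f (φ N)) < Real.sqrt ε := hN (N + 1) (by omega)
  have hmono : φ N < φ (N + 1) := hφ (by omega)
  set k := φ (N + 1) - φ N with hk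
  have hk1 : 1 ≤ k := by omega
  have hks : φ N + k = φ (N + 1) := by omega
  have hdist : ‖(W ^ k) a - a‖ < Real.sqrt ε := by
    have heq : (W ^ φ N) ((W ^ k) a - a) = f (φ (N + 1)) - f (φ N) := by
      rw [map_sub, hf]
      simp only [← ContinuousLinearMap.mul_apply, ← pow_add, hks]
    have := (W ^ φ N).norm_map_of_mem_unitary (hWn (φ N)) ((W ^ k) a - a)
    rw [heq] at this
    rw [← this]
    rwa [dist_eq_norm] at h1
  refine ⟨k, hk1, ?_⟩
  have hb : ‖(W ^ k) a‖ = 1 := hfnorm k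
  have hsq : ‖a - (W ^ k) a‖ ^ 2 = 2 - 2 * RCLike.re (inner ℂ a ((W ^ k) a) : ℂ) := by
    rw [@norm_sub_sq ℂ, ha, hb]; ring
  have hlt : ‖a - (W ^ k) a‖ ^ 2 < ε := by
    rw [norm_sub_rev]
    calc ‖(W ^ k) a - a‖ ^ 2 < Real.sqrt ε ^ 2 := by
          apply sq_lt_sq' _ hdist
          linarith [norm_nonneg ((W ^ k) a - a)]
      _ = ε := Real.sq_sqrt hε.le
  have hre : RCLike.re (inner ℂ a ((W ^ k) a) : ℂ) > 1 - ε := by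
    nlinarith [hsq]
  calc (1 : ℝ) - ε < RCLike.re (inner ℂ a ((W ^ k) a) : ℂ) := hre
    _ ≤ ‖(inner ℂ a ((W ^ k) a) : ℂ)‖ := RCLike.re_le_norm _
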